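/- Let p be a STRIPS₁¹ instance on n variables (n ≥ 3), let v ∈ Fin n, and suppose A contains actions a = (l₁, (v, true)) and b = (l₂, (v, false)) with l₁ ≠ negation of l₂ and with the variables of l₁ and l₂ both different from v. Then every unordered pair {s, s'} of states with s' = s ⊕ (v, false), such that l₁, l₂ and (v, true) all hold in s, is a bidirectional edge of Q_n(p) in coordinate v; the number of such pairs is 2^(n−3) if l₁ ≠ l₂ and 2^(n−2) if l₁ = l₂. -/
import Mathlib


/-- A literal over `n` propositional variables: a variable together with a Boolean sign. -/
abbrev Lit (n : ℕ) : Type := Fin n × Bool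

/-- A state: a truth assignment to the `n` variables. -/
abbrev State (n : ℕ) : Type := Fin n → Bool

/-- The negation of a literal. -/
def Lit.neg {n : ℕ} (l : Lit n) : Lit n := (l.1, !l.2)

/-- A literal holds in a state iff the state assigns it its sign. -/
def Holds {n : ℕ} (s : State n) (l : Lit n) : Prop := s l.1 = l.2

/-- `s ⊕ l`: the state agreeing with `s` except variable `l.1` is set to `l.2`. -/
def applyLit {n : ℕ} (s : State n) (l : Lit n) : State n :=
  Function.update s l.1 l.2

/-- A STRIPS₁¹ action (Act): a pair (precondition, effect) of literals. -/
abbrev Act (n : ℕ) : Type := Lit n × Lit n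

/-- Edge of the induced graph `Q_n(p)`. -/
def Edge {n : ℕ} (A : Finset (Act n)) (s s' : State n) : Prop :=
  ∃ a ∈ A, Holds s a.1 ∧ s' = applyLit s a.2 ∧ s' ≠ s

/-- `{s₁, s₂}` is a bidirectional edge: edges in both directions. -/
def BidirEdge {n : ℕ} (A : Finset (Act n)) (s₁ s₂ : State n) : Prop :=
  Edge A s₁ s₂ ∧ Edge A s₂ s₁

/-- The set of bidirectional edges of `Q_n(p)`, as unordered pairs of states. -/
def bidirEdges {n : ℕ} (A : Finset (Act n)) : Set (Sym2 (State n)) :=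
  {e | ∃ s₁ s₂, e = s(s₁, s₂) ∧ BidirEdge A s₁ s₂}

/-- The set of bidirectional edges of `Q_n(p)` in coordinate `v`:
the two endpoints differ exactly in the variable `v`. -/
def bidirEdgesIn {n : ℕ} (A : Finset (Act n)) (v : Fin n) : Set (Sym2 (State n)) :=
  {e | ∃ s₁ s₂, e = s(s₁, s₂) ∧ BidirEdge A s₁ s₂ ∧
    s₁ v ≠ s₂ v ∧ ∀ w : Fin n, w ≠ v → s₁ w = s₂ w}

/-- A good instance: each variable has a positive and a negative achiever
whose preconditions are not each other's negation. -/
def Good {n : ℕ} (A : Finset (Act n)) : Prop :=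
  ∀ v : Fin n, ∃ a ∈ A, ∃ b ∈ A,
    a.2 = (v, true) ∧ b.2 = (v, false) ∧ a.1 ≠ Lit.neg b.1

/-- The state obtained by applying the effects of a list of actions to `s`. -/
def execStates {n : ℕ} (s : State n) (ω : List (Act n)) : State n :=
  ω.foldl (fun t a => applyLit t a.2) s

/-- `ω` is a plan from `sI` to `sG` for the instance with actions `A`. -/
def IsPlan {n : ℕ} (A : Finset (Act n)) (sI sG : State n) (ω : List (Act n)) : Prop :=
  (∀ i : Fin ω.length, ω.get i ∈ A ∧ Holds (execStates sI (ω.take i)) (ω.get i).1) ∧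
  execStates sI ω = sG

/-- `ω` is a shortest plan from `sI` to `sG`. -/
def IsShortestPlan {n : ℕ} (A : Finset (Act n)) (sI sG : State n)
    (ω : List (Act n)) : Prop :=
  IsPlan A sI sG ω ∧ ∀ ω', IsPlan A sI sG ω' → ω.length ≤ ω'.length

/-- The plan `ω` started at `sI` visits the state `s`. -/
def Visits {n : ℕ} (sI : State n) (ω : List (Act n)) (s : State n) : Prop :=
  ∃ i ≤ ω.length, execStates sI (ω.take i) = s


/-- if `A` contains actions `(l₁, (v,true))` and `(l₂, (v,false))` with
`l₁ ≠ ¬l₂` and the variables of `l₁, l₂` different from `v`, then every pair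
`{s, s ⊕ (v,false)}` with `l₁`, `l₂`, `(v,true)` holding in `s` is a bidirectional
edge in coordinate `v`, and the number of such pairs is `2^(n-3)` if `l₁ ≠ l₂`
and `2^(n-2)` if `l₁ = l₂`. -/

lemma ncard_fixed {n : ℕ} (T : Finset (Fin n)) (f : Fin n → Bool) :
    Set.ncard {s : State n | ∀ i ∈ T, s i = f i} = 2 ^ (n - T.card) := by
  classical
  have e : {s : State n | ∀ i ∈ T, s i = f i} ≃ ({i : Fin n // i ∉ T} → Bool) :=
    { toFun := fun s i => s.1 i.1
      invFun := fun g => ⟨fun i => if h : i ∈ T then f i else g ⟨i, h⟩,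
        fun i hi => by simp [hi]⟩
      left_inv := fun s => Subtype.ext (funext fun i => by
        by_cases h : i ∈ T
        · simp [h, s.2 i h]
        · simp [h])
      right_inv := fun g => funext fun i => by simp [i.2] }
  have h1 : Set.ncard {s : State n | ∀ i ∈ T, s i = f i}
      = Nat.card ({i : Fin n // i ∉ T} → Bool) := by
    rw [← Nat.card_coe_set_eq]
    exact Nat.card_congr e
  rw [h1, Nat.card_eq_fintype_card, Fintype.card_fun, Fintype.card_bool]
  congr 1
  rw [Fintype.card_subtype_compl, Fintype.card_coe, Fintype.card_fin]

theorem stmt1 {n : ℕ} (hn : 3 ≤ n) (A : Finset (Act n)) (v : Fin n)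
    (l₁ l₂ : Lit n) (ha : (l₁, ((v, true) : Lit n)) ∈ A)
    (hb : (l₂, ((v, false) : Lit n)) ∈ A)
    (hneg : l₁ ≠ Lit.neg l₂) (hv₁ : l₁.1 ≠ v) (hv₂ : l₂.1 ≠ v) :
    (∀ s : State n, Holds s l₁ → Holds s l₂ → s v = true →
        s(s, applyLit s ((v, false) : Lit n)) ∈ bidirEdgesIn A v) ∧
    {e : Sym2 (State n) | ∃ s : State n, Holds s l₁ ∧ Holds s l₂ ∧ s v = true ∧
        e = s(s, applyLit s ((v, false) : Lit n))}.ncard =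
      (if l₁ ≠ l₂ then 2 ^ (n - 3) else 2 ^ (n - 2)):= by
  classical
  have hne : ∀ s : State n, s v = true → applyLit s ((v, false) : Lit n) ≠ s := by
    intro s hv h
    have := congrFun h v
    simp [applyLit, Function.update_self] at this
    rw [hv] at this
    simp at this
  constructor
  · intro s h1 h2 hv
    refine ⟨s, applyLit s ((v, false) : Lit n), rfl, ⟨?_, ?_⟩, ?_, ?_⟩
    · exact ⟨(l₂, ((v, false) : Lit n)), hb, h2, rfl, hne s hv⟩
    · refine ⟨(l₁, ((v, true) : Lit n)), ha, ?_, ?_, ?_⟩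
      · show applyLit s ((v, false) : Lit n) l₁.1 = l₁.2
        rw [applyLit, Function.update_of_ne hv₁]
        exact h1
      · funext w
        by_cases hw : w = v
        · subst hw
          simp [applyLit, Function.update_self, hv]
        · simp [applyLit, Function.update_of_ne hw]
      · intro h
        exact hne s hv h.symm
    · simp [applyLit, Function.update_self, hv]
    · intro w hw
      simp [applyLit, Function.update_of_ne hw]
  · have himg : {e : Sym2 (State n) | ∃ s : State n, Holds s l₁ ∧ Holds s l₂ ∧ s v = true ∧
        e = s(s, applyLit s ((v, false) : Lit n))}
        = (fun s => s(s, applyLit s ((v, false) : Lit n))) ''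
          {s : State n | Holds s l₁ ∧ Holds s l₂ ∧ s v = true} := by
      ext e
      simp only [Set.mem_setOf_eq, Set.mem_image]
      constructor
      · rintro ⟨s, a, b, c, rfl⟩; exact ⟨s, ⟨a, b, c⟩, rfl⟩
      · rintro ⟨s, ⟨a, b, c⟩, rfl⟩; exact ⟨s, a, b, c, rfl⟩
    have hinj : Set.InjOn (fun s => s(s, applyLit s ((v, false) : Lit n)))
        {s : State n | Holds s l₁ ∧ Holds s l₂ ∧ s v = true} := by
      intro s hs t ht h
      simp only [Sym2.eq, Sym2.rel_iff', Prod.mk.injEq, Prod.swap_prod_mk] at h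
      rcases h with ⟨h, -⟩ | ⟨h, -⟩
      · exact h
      · exfalso
        have := congrFun h v
        rw [hs.2.2] at this
        simp [applyLit, Function.update_self] at this
    rw [himg, Set.ncard_image_of_injOn hinj]
    by_cases heq : l₁ = l₂
    · subst heq
      simp only [ne_eq, not_true_eq_false, if_neg, if_false, not_not]
      have hset : {s : State n | Holds s l₁ ∧ Holds s l₁ ∧ s v = true}
          = {s : State n | ∀ i ∈ ({l₁.1, v} : Finset (Fin n)), s i =
              (fun i => if i = v then true else l₁.2) i} := by
        ext s
        simp only [Set.mem_setOf_eq, Finset.mem_insert, Finset.mem_singleton, Holds]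
        constructor
        · rintro ⟨a, -, c⟩ i hi
          rcases hi with rfl | rfl
          · simp [hv₁, a]
          · simp [c]
        · intro h
          have h1 := h l₁.1 (Or.inl rfl)
          have h2 := h v (Or.inr rfl)
          simp [hv₁] at h1
          simp at h2
          exact ⟨h1, h1, h2⟩
      rw [hset, ncard_fixed]
      congr 1
      rw [Finset.card_insert_of_notMem (by simp [hv₁]), Finset.card_singleton]
    · have hne12 : l₁.1 ≠ l₂.1 := by
        intro h
        apply heq
        have : l₁.2 = l₂.2 := by
          by_contra hb2
          apply hneg
          have : l₁.2 = !l₂.2 := by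
            cases hl : l₁.2 <;> cases hl2 : l₂.2 <;> simp_all
          exact Prod.ext h this
        exact Prod.ext h this
      simp only [ne_eq, heq, not_false_eq_true, if_true]
      have hset : {s : State n | Holds s l₁ ∧ Holds s l₂ ∧ s v = true}
          = {s : State n | ∀ i ∈ ({l₁.1, l₂.1, v} : Finset (Fin n)), s i =
              (fun i => if i = v then true else if i = l₁.1 then l₁.2 else l₂.2) i} := by
        ext s
        simp only [Set.mem_setOf_eq, Finset.mem_insert, Finset.mem_singleton, Holds]
        constructor
        · rintro ⟨a, b, c⟩ i hi
          rcases hi with rfl | rfl | rfl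
          · simp [hv₁, a]
          · simp [hv₂, hne12.symm, b]
          · simp [c]
        · intro h
          have h1 := h l₁.1 (Or.inl rfl)
          have h2 := h l₂.1 (Or.inr (Or.inl rfl))
          have h3 := h v (Or.inr (Or.inr rfl))
          simp [hv₁] at h1
          simp [hv₂, hne12.symm] at h2
          simp at h3
          exact ⟨h1, h2, h3⟩
      rw [hset, ncard_fixed]
      congr 1
      rw [Finset.card_insert_of_notMem (by simp [hne12, hv₁]),
        Finset.card_insert_of_notMem (by simp [hv₂]), Finset.card_singleton]
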